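/- There exists a constant C > 0, depending only on ν and K, such that for every ξ ∈ ℝ³ with ξ ≠ 0 and every ξ_* ∈ ℝ³, ∫_{𝕊²} b((ξ/|ξ|)·σ) (1 − (ξ/|ξ|)·σ) 𝟙_{|ξ − |ξ|σ| ≤ ⟨ξ_*⟩} dσ ≤ C min{ 1, (⟨ξ_*⟩/⟨ξ⟩)^{2-ν} }. -/

import Mathlib

open MeasureTheory Filter
open scoped Topology ENNReal InnerProductSpace FourierTransform

noncomputable section

/-- Velocity space `ℝ³`. -/
abbrev V3 : Type := EuclideanSpace ℝ (Fin 3)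

/-- Japanese bracket `⟨v⟩ = (1+|v|²)^{1/2}`. -/
def jap (v : V3) : ℝ := Real.sqrt (1 + ‖v‖ ^ 2)

/-- Normalized Maxwellian `μ(v) = (2π)^{-3/2} exp(-|v|²/2)`. -/
def maxw (v : V3) : ℝ := (2 * Real.pi) ^ (-(3 : ℝ) / 2) * Real.exp (-‖v‖ ^ 2 / 2)

/-- Surface measure on the unit sphere `𝕊² ⊂ ℝ³` (2-dimensional Hausdorff measure). -/
def sphereMeasure : Measure V3 := (μH[2] : Measure V3).restrict (Metric.sphere (0 : V3) 1)

/-- Post-collisional velocity `v' = (v+v_*)/2 + (|v-v_*|/2)σ`. -/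
def vPost (v vs σ : V3) : V3 := (2 : ℝ)⁻¹ • (v + vs) + (‖v - vs‖ / 2) • σ

/-- Post-collisional velocity `v'_* = (v+v_*)/2 - (|v-v_*|/2)σ`. -/
def vPostS (v vs σ : V3) : V3 := (2 : ℝ)⁻¹ • (v + vs) - (‖v - vs‖ / 2) • σ

/-- Deviation angle `θ`, `cos θ = ((v-v_*)/|v-v_*|)·σ`. -/
def dev (v vs σ : V3) : ℝ := Real.arccos ⟪‖v - vs‖⁻¹ • (v - vs), σ⟫_ℝ

/-- Collision kernel `B(v-v_*,σ) = |v-v_*|^γ b(((v-v_*)/|v-v_*|)·σ)`. -/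
def Bker (γ : ℝ) (b : ℝ → ℝ) (v vs σ : V3) : ℝ :=
  ‖v - vs‖ ^ γ * b ⟪‖v - vs‖⁻¹ • (v - vs), σ⟫_ℝ

/-- Angular-truncated trilinear pairing `∭_{θ ≥ ε} Bf (F'_* G' - F_* G) h`. -/
def QTrunc (Bf : V3 → V3 → V3 → ℝ) (F G h : V3 → ℝ) (ε : ℝ) : ℝ :=
  ∫ v : V3, ∫ vs : V3, ∫ σ : V3,
    (if ε ≤ dev v vs σ then
        Bf v vs σ * (F (vPostS v vs σ) * G (vPost v vs σ) - F vs * G v) * h v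
      else 0) ∂sphereMeasure

/-- Truncated pairing defining `⟨Γ(f,g), h⟩`. -/
def GammaTrunc (γ : ℝ) (b : ℝ → ℝ) (f g h : V3 → ℝ) (ε : ℝ) : ℝ :=
  QTrunc (fun v vs σ => Bker γ b v vs σ * Real.sqrt (maxw vs)) f g h ε

/-- Truncated pairing defining `⟨Q_c(F,G), h⟩` (kinetic factor cut off by `φ₀`). -/
def QcTrunc (γ : ℝ) (b φ₀ : ℝ → ℝ) (F G h : V3 → ℝ) (ε : ℝ) : ℝ :=
  QTrunc (fun v vs σ => φ₀ ‖v - vs‖ * Bker γ b v vs σ) F G h ε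

/-- Weighted `L²` norm `‖⟨·⟩^ℓ f‖_{L²}`. -/
def L2w (ℓ : ℝ) (f : V3 → ℝ) : ℝ :=
  (∫ v : V3, jap v ^ (2 * ℓ) * f v ^ 2) ^ ((1 : ℝ) / 2)

/-- Square of the non-isotropic triple norm (as an extended real). -/
def tripleNormSqE (γ : ℝ) (b : ℝ → ℝ) (f : V3 → ℝ) : ℝ≥0∞ :=
  (∫⁻ v : V3, ∫⁻ vs : V3, ∫⁻ σ : V3,
      ENNReal.ofReal (Bker γ b v vs σ * maxw vs * (f (vPost v vs σ) - f v) ^ 2) ∂sphereMeasure)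
    + ∫⁻ v : V3, ∫⁻ vs : V3, ∫⁻ σ : V3,
        ENNReal.ofReal (Bker γ b v vs σ * f vs ^ 2 *
          (Real.sqrt (maxw (vPost v vs σ)) - Real.sqrt (maxw v)) ^ 2) ∂sphereMeasure

/-- The triple norm `|||f|||`. -/
def tripleNorm (γ : ℝ) (b : ℝ → ℝ) (f : V3 → ℝ) : ℝ :=
  Real.sqrt (tripleNormSqE γ b f).toReal

/-- Dissipation functional `𝒟(F,φ) = ∭ B F_* (φ - φ')²`. -/
def Ddiss (γ : ℝ) (b : ℝ → ℝ) (F φ : V3 → ℝ) : ℝ :=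
  (∫⁻ v : V3, ∫⁻ vs : V3, ∫⁻ σ : V3,
      ENNReal.ofReal (Bker γ b v vs σ * F vs * (φ v - φ (vPost v vs σ)) ^ 2) ∂sphereMeasure).toReal

/-- Weighted Sobolev norm `‖f‖_{H^s_ℓ}`. -/
def sobNorm (s ℓ : ℝ) (f : V3 → ℝ) : ℝ :=
  (∫ ξ : V3, jap ξ ^ (2 * s) * ‖𝓕 (fun v : V3 => ((jap v ^ ℓ * f v : ℝ) : ℂ)) ξ‖ ^ 2) ^ ((1 : ℝ) / 2)

/-- Standing assumptions on the angular kernel `b`. -/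
def KernelHyp (ν K : ℝ) (b : ℝ → ℝ) : Prop :=
  Measurable b ∧ (∀ t, 0 ≤ b t) ∧ (∀ t < (0 : ℝ), b t = 0) ∧
    ∀ θ ∈ Set.Ioc (0 : ℝ) (Real.pi / 2),
      K⁻¹ * θ ^ (-2 - ν) ≤ b (Real.cos θ) ∧ b (Real.cos θ) ≤ K * θ ^ (-2 - ν)


/-- spherical integral bound with the small-deviation cutoff
(kernel estimate `later-use1`/`later-use2`). -/
lemma coord_abs_le_norm (x : V3) (j : Fin 3) : |x j| ≤ ‖x‖ := by
  rw [EuclideanSpace.norm_eq, ← Real.sqrt_sq_eq_abs]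
  apply Real.sqrt_le_sqrt
  have : x j ^ 2 ≤ ∑ i, x i ^ 2 :=
    Finset.single_le_sum (f := fun i => x i ^ 2) (fun i _ => sq_nonneg _) (Finset.mem_univ j)
  simpa using this

lemma coord_dist_le (a b : V3) (j : Fin 3) : |a j - b j| ≤ dist a b := by
  rw [dist_eq_norm]
  exact coord_abs_le_norm (a - b) j

def sphChart (i : Fin 3) (s : ℝ) (u : Fin 2 → ℝ) : V3 :=
  (WithLp.equiv 2 (Fin 3 → ℝ)).symm
    (Fin.insertNth i (s * Real.sqrt (1 - (u 0 ^ 2 + u 1 ^ 2))) u)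

lemma sphChart_apply_same (i : Fin 3) (s : ℝ) (u : Fin 2 → ℝ) :
    sphChart i s u i = s * Real.sqrt (1 - (u 0 ^ 2 + u 1 ^ 2)) := by
  simp [sphChart, WithLp.equiv_symm_apply]

lemma sphChart_apply_succAbove (i : Fin 3) (s : ℝ) (u : Fin 2 → ℝ) (k : Fin 2) :
    sphChart i s u (i.succAbove k) = u k := by
  simp [sphChart, WithLp.equiv_symm_apply]

def chartDom : Set (Fin 2 → ℝ) := {u | u 0 ^ 2 + u 1 ^ 2 ≤ 2/3}

lemma norm_sq_eq (σ : V3) : ‖σ‖ ^ 2 = ∑ j, σ j ^ 2 := by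
  rw [EuclideanSpace.norm_eq, Real.sq_sqrt]
  · simp [sq_abs]
  · positivity

lemma sphChart_covers (i : Fin 3) (s : ℝ) (hs : s = 1 ∨ s = -1) (σ : V3)
    (hσ : ‖σ‖ = 1) (h : 1 / Real.sqrt 3 ≤ s * σ i) :
    ∃ u ∈ chartDom, sphChart i s u = σ := by
  have hs2 : s ^ 2 = 1 := by rcases hs with h | h <;> simp [h]
  have hpos : (0:ℝ) ≤ s * σ i := le_trans (by positivity) h
  have hsum : (1:ℝ) = σ i ^ 2 + (σ (i.succAbove 0) ^ 2 + σ (i.succAbove 1) ^ 2) := by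
    have h' := Fin.sum_univ_succAbove (fun j => σ j ^ 2) i
    rw [Fin.sum_univ_two] at h'
    rw [← h', ← norm_sq_eq, hσ]; norm_num
  have hσi : (1:ℝ)/3 ≤ σ i ^ 2 := by
    have h1 : (1 / Real.sqrt 3) ^ 2 ≤ (s * σ i) ^ 2 := by
      apply pow_le_pow_left₀ (by positivity) h
    have h2 : (1 / Real.sqrt 3 : ℝ) ^ 2 = 1/3 := by
      rw [div_pow, Real.sq_sqrt (by norm_num : (0:ℝ) ≤ 3)]; norm_num
    have h3 : (s * σ i) ^ 2 = σ i ^ 2 := by rw [mul_pow, hs2, one_mul]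
    linarith [h1, h2.symm ▸ h1, h3 ▸ h1]
  refine ⟨fun k => σ (i.succAbove k), ?_, ?_⟩
  · show σ (i.succAbove 0) ^ 2 + σ (i.succAbove 1) ^ 2 ≤ 2/3
    linarith
  · ext j
    rcases eq_or_ne j i with rfl | hj
    · rw [sphChart_apply_same]
      have e1 : 1 - (σ (j.succAbove 0) ^ 2 + σ (j.succAbove 1) ^ 2) = σ j ^ 2 := by linarith
      rw [e1, Real.sqrt_sq_eq_abs]
      rcases hs with rfl | rfl
      · rw [one_mul] at hpos ⊢; exact abs_of_nonneg hpos
      · have : σ j ≤ 0 := by nlinarith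
        rw [abs_of_nonpos this]; ring
    · obtain ⟨k, rfl⟩ := Fin.exists_succAbove_eq hj
      exact sphChart_apply_succAbove i s _ k

lemma sqrt_diff_le (u v : Fin 2 → ℝ) (hu : u ∈ chartDom) (hv : v ∈ chartDom) :
    |Real.sqrt (1 - (u 0 ^ 2 + u 1 ^ 2)) - Real.sqrt (1 - (v 0 ^ 2 + v 1 ^ 2))| ≤
      4 * dist u v := by
  have hu' : u 0 ^ 2 + u 1 ^ 2 ≤ 2/3 := hu
  have hv' : v 0 ^ 2 + v 1 ^ 2 ≤ 2/3 := hv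
  set gu := Real.sqrt (1 - (u 0 ^ 2 + u 1 ^ 2)) with hgu
  set gv := Real.sqrt (1 - (v 0 ^ 2 + v 1 ^ 2)) with hgv
  have hgu2 : gu ^ 2 = 1 - (u 0 ^ 2 + u 1 ^ 2) := Real.sq_sqrt (by linarith)
  have hgv2 : gv ^ 2 = 1 - (v 0 ^ 2 + v 1 ^ 2) := Real.sq_sqrt (by linarith)
  have hgul : Real.sqrt (1/3) ≤ gu := Real.sqrt_le_sqrt (by linarith)
  have hgvl : Real.sqrt (1/3) ≤ gv := Real.sqrt_le_sqrt (by linarith)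
  have h13 : (1:ℝ)/2 ≤ Real.sqrt (1/3) := by
    rw [show (1:ℝ)/2 = Real.sqrt ((1/2)^2) by rw [Real.sqrt_sq]; norm_num]
    apply Real.sqrt_le_sqrt; norm_num
  have hsum1 : 1 ≤ gu + gv := by linarith
  -- coordinate bounds
  have habs1 : ∀ x : ℝ, x ^ 2 ≤ 2/3 → |x| ≤ 1 := fun x hx => by
    nlinarith [sq_abs x, abs_nonneg x]
  have hb : ∀ w : Fin 2 → ℝ, w ∈ chartDom → (|w 0| ≤ 1 ∧ |w 1| ≤ 1) := by
    intro w hw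
    have hw' : w 0 ^ 2 + w 1 ^ 2 ≤ 2/3 := hw
    exact ⟨habs1 _ (by nlinarith [sq_nonneg (w 1)]), habs1 _ (by nlinarith [sq_nonneg (w 0)])⟩
  have hd : ∀ k, |u k - v k| ≤ dist u v := fun k => by
    rw [← Real.dist_eq]; exact dist_le_pi_dist u v k
  have key : |gu - gv| * (gu + gv) ≤ 4 * dist u v := by
    have e : (gu - gv) * (gu + gv) = gu^2 - gv^2 := by ring
    have : |gu - gv| * (gu + gv) = |gu^2 - gv^2| := by
      rw [← abs_of_nonneg (by linarith : (0:ℝ) ≤ gu + gv), ← abs_mul, e]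
    rw [this, hgu2, hgv2]
    have e2 : 1 - (u 0 ^ 2 + u 1 ^ 2) - (1 - (v 0 ^ 2 + v 1 ^ 2))
        = (v 0 - u 0) * (v 0 + u 0) + (v 1 - u 1) * (v 1 + u 1) := by ring
    rw [e2]
    have b0 : |(v 0 - u 0) * (v 0 + u 0)| ≤ dist u v * 2 := by
      rw [abs_mul]
      apply mul_le_mul
      · rw [abs_sub_comm]; exact hd 0
      · calc |v 0 + u 0| ≤ |v 0| + |u 0| := abs_add_le _ _
          _ ≤ 2 := by linarith [(hb u hu).1, (hb v hv).1]
      · exact abs_nonneg _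
      · exact dist_nonneg
    have b1 : |(v 1 - u 1) * (v 1 + u 1)| ≤ dist u v * 2 := by
      rw [abs_mul]
      apply mul_le_mul
      · rw [abs_sub_comm]; exact hd 1
      · calc |v 1 + u 1| ≤ |v 1| + |u 1| := abs_add_le _ _
          _ ≤ 2 := by linarith [(hb u hu).2, (hb v hv).2]
      · exact abs_nonneg _
      · exact dist_nonneg
    calc |(v 0 - u 0) * (v 0 + u 0) + (v 1 - u 1) * (v 1 + u 1)|
        ≤ |(v 0 - u 0) * (v 0 + u 0)| + |(v 1 - u 1) * (v 1 + u 1)| := abs_add_le _ _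
      _ ≤ 4 * dist u v := by linarith
  calc |gu - gv| = |gu - gv| * 1 := (mul_one _).symm
    _ ≤ |gu - gv| * (gu + gv) := by
        apply mul_le_mul_of_nonneg_left hsum1 (abs_nonneg _)
    _ ≤ 4 * dist u v := key

lemma sphChart_lipschitz (i : Fin 3) (s : ℝ) (hs : s = 1 ∨ s = -1) :
    LipschitzOnWith 5 (sphChart i s) chartDom := by
  rw [lipschitzOnWith_iff_dist_le_mul]
  intro u hu v hv
  have habs : |s| = 1 := by rcases hs with rfl | rfl <;> simp
  rw [EuclideanSpace.dist_eq]
  have hsum := Fin.sum_univ_succAbove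
    (fun j => dist (sphChart i s u j) (sphChart i s v j) ^ 2) i
  rw [Fin.sum_univ_two] at hsum
  rw [hsum]
  have hgd := sqrt_diff_le u v hu hv
  have e0 : dist (sphChart i s u i) (sphChart i s v i)
      = |s| * |Real.sqrt (1 - (u 0 ^ 2 + u 1 ^ 2)) - Real.sqrt (1 - (v 0 ^ 2 + v 1 ^ 2))| := by
    rw [sphChart_apply_same, sphChart_apply_same, Real.dist_eq, ← abs_mul]
    ring_nf
  have hd : ∀ k, dist (sphChart i s u (i.succAbove k)) (sphChart i s v (i.succAbove k))
      ≤ dist u v := by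
    intro k
    rw [sphChart_apply_succAbove, sphChart_apply_succAbove]
    exact dist_le_pi_dist u v k
  have hdnn : (0:ℝ) ≤ dist u v := dist_nonneg
  have h0 : dist (sphChart i s u i) (sphChart i s v i) ≤ 4 * dist u v := by
    rw [e0, habs, one_mul]; exact hgd
  have : dist (sphChart i s u i) (sphChart i s v i) ^ 2
      + (dist (sphChart i s u (i.succAbove 0)) (sphChart i s v (i.succAbove 0)) ^ 2
        + dist (sphChart i s u (i.succAbove 1)) (sphChart i s v (i.succAbove 1)) ^ 2)
      ≤ (5 * dist u v) ^ 2 := by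
    have d0 := hd 0; have d1 := hd 1
    nlinarith [dist_nonneg (x := sphChart i s u i) (y := sphChart i s v i),
      dist_nonneg (x := sphChart i s u (i.succAbove 0)) (y := sphChart i s v (i.succAbove 0)),
      dist_nonneg (x := sphChart i s u (i.succAbove 1)) (y := sphChart i s v (i.succAbove 1))]
  refine le_trans (Real.sqrt_le_sqrt this) ?_
  rw [Real.sqrt_sq (by positivity)]
  norm_num

lemma chart_piece_bound (x : V3) (ρ : ℝ) (hρ : 0 ≤ ρ) (i : Fin 3) (s : ℝ)
    (hs : s = 1 ∨ s = -1) :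
    μH[2] ({σ : V3 | ‖σ‖ = 1 ∧ 1 / Real.sqrt 3 ≤ s * σ i} ∩ Metric.closedBall x ρ)
      ≤ ENNReal.ofReal (400 * ρ ^ 2) := by
  set F := sphChart i s with hF
  set A := chartDom ∩ F ⁻¹' (Metric.closedBall x ρ) with hA
  have hsub : {σ : V3 | ‖σ‖ = 1 ∧ 1 / Real.sqrt 3 ≤ s * σ i} ∩ Metric.closedBall x ρ
      ⊆ F '' A := by
    rintro σ ⟨⟨h1, h2⟩, hb⟩
    obtain ⟨u, hu, rfl⟩ := sphChart_covers i s hs σ h1 h2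
    exact ⟨u, ⟨hu, hb⟩, rfl⟩
  have hlip := (sphChart_lipschitz i s hs).mono
    (Set.inter_subset_left (t := F ⁻¹' (Metric.closedBall x ρ)))
  have him : μH[2] (F '' A) ≤ ((5 : NNReal) : ℝ≥0∞) ^ (2:ℝ) * μH[2] A :=
    hlip.hausdorffMeasure_image_le (by norm_num)
  have hμeq : (μH[2] : Measure (Fin 2 → ℝ)) = volume := by
    have h := MeasureTheory.hausdorffMeasure_pi_real (ι := Fin 2)
    rw [show ((Fintype.card (Fin 2) : ℝ)) = (2:ℝ) by simp] at h
    exact h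
  have hAvol : μH[2] A ≤ ENNReal.ofReal (16 * ρ ^ 2) := by
    rcases A.eq_empty_or_nonempty with hAe | ⟨u₀, hu₀⟩
    · simp [hAe]
    · have hsub2 : A ⊆ Metric.closedBall u₀ (2 * ρ) := by
        intro u hu
        rw [Metric.mem_closedBall, dist_pi_le_iff (by positivity)]
        intro k
        have h1 : dist (F u) x ≤ ρ := hu.2
        have h2 : dist (F u₀) x ≤ ρ := hu₀.2
        have h3 := coord_dist_le (F u) (F u₀) (i.succAbove k)
        rw [hF, sphChart_apply_succAbove, sphChart_apply_succAbove] at h3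
        have h4 : dist (F u) (F u₀) ≤ 2 * ρ := by
          calc dist (F u) (F u₀) ≤ dist (F u) x + dist x (F u₀) := dist_triangle _ _ _
            _ ≤ 2 * ρ := by rw [dist_comm x (F u₀)]; linarith
        rw [Real.dist_eq]
        exact le_trans h3 h4
      calc μH[2] A ≤ μH[2] (Metric.closedBall u₀ (2 * ρ)) := measure_mono hsub2
        _ = volume (Metric.closedBall u₀ (2 * ρ)) := by rw [hμeq]
        _ = ENNReal.ofReal ((2 * (2 * ρ)) ^ Fintype.card (Fin 2)) :=
            Real.volume_pi_closedBall u₀ (by positivity)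
        _ = ENNReal.ofReal (16 * ρ ^ 2) := by
            congr 1
            rw [Fintype.card_fin]
            ring
  have h25 : ((5 : NNReal) : ℝ≥0∞) ^ (2:ℝ) = 25 := by
    rw [show (2:ℝ) = ((2:ℕ):ℝ) by norm_num, ENNReal.rpow_natCast]
    norm_num
  calc μH[2] ({σ : V3 | ‖σ‖ = 1 ∧ 1 / Real.sqrt 3 ≤ s * σ i} ∩ Metric.closedBall x ρ)
      ≤ μH[2] (F '' A) := measure_mono hsub
    _ ≤ ((5 : NNReal) : ℝ≥0∞) ^ (2:ℝ) * μH[2] A := him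
    _ ≤ 25 * ENNReal.ofReal (16 * ρ ^ 2) := by
        rw [h25]; gcongr
    _ = ENNReal.ofReal (400 * ρ ^ 2) := by
        rw [show (25:ℝ≥0∞) = ENNReal.ofReal 25 by norm_num,
          ← ENNReal.ofReal_mul (by norm_num)]
        congr 1; ring

lemma cap_bound (x : V3) (ρ : ℝ) (hρ : 0 ≤ ρ) :
    μH[2] (Metric.sphere (0:V3) 1 ∩ Metric.closedBall x ρ)
      ≤ ENNReal.ofReal (2400 * ρ ^ 2) := by
  set P : Fin 3 × Bool → Set V3 := fun p =>
    {σ : V3 | ‖σ‖ = 1 ∧ 1 / Real.sqrt 3 ≤ (if p.2 then (1:ℝ) else -1) * σ p.1}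
      ∩ Metric.closedBall x ρ with hP
  have hcover : Metric.sphere (0:V3) 1 ∩ Metric.closedBall x ρ ⊆ ⋃ p, P p := by
    rintro σ ⟨hσ, hb⟩
    rw [mem_sphere_zero_iff_norm] at hσ
    have hex : ∃ i : Fin 3, 1/3 ≤ σ i ^ 2 := by
      by_contra hc
      push_neg at hc
      have h0 := hc 0; have h1 := hc 1; have h2 := hc 2
      have hsum : ∑ j, σ j ^ 2 = 1 := by rw [← norm_sq_eq, hσ]; norm_num
      rw [Fin.sum_univ_three] at hsum
      linarith
    obtain ⟨i, hi⟩ := hex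
    have hs3 : Real.sqrt (1/3) = 1 / Real.sqrt 3 := by
      rw [show (1/3 : ℝ) = 3⁻¹ by norm_num, Real.sqrt_inv, one_div]
    have habs : 1 / Real.sqrt 3 ≤ |σ i| := by
      rw [← Real.sqrt_sq_eq_abs, ← hs3]
      exact Real.sqrt_le_sqrt hi
    by_cases hsign : 0 ≤ σ i
    · exact Set.mem_iUnion.2 ⟨(i, true),
        ⟨⟨hσ, by rw [if_pos rfl, one_mul, ← abs_of_nonneg hsign]; exact habs⟩, hb⟩⟩
    · refine Set.mem_iUnion.2 ⟨(i, false), ⟨⟨hσ, ?_⟩, hb⟩⟩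
      show 1 / Real.sqrt 3 ≤ -1 * σ i
      rw [neg_one_mul, ← abs_of_nonpos (le_of_not_ge hsign)]
      exact habs
  calc μH[2] (Metric.sphere (0:V3) 1 ∩ Metric.closedBall x ρ)
      ≤ μH[2] (⋃ p, P p) := measure_mono hcover
    _ ≤ ∑ p : Fin 3 × Bool, μH[2] (P p) := measure_iUnion_fintype_le _ _
    _ ≤ ∑ _p : Fin 3 × Bool, ENNReal.ofReal (400 * ρ ^ 2) := by
        apply Finset.sum_le_sum
        intro p _
        exact chart_piece_bound x ρ hρ p.1 _ (by rcases p with ⟨i, _ | _⟩ <;> simp)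
    _ = ENNReal.ofReal (2400 * ρ ^ 2) := by
        rw [Finset.sum_const]
        simp only [Finset.card_univ]
        rw [show Fintype.card (Fin 3 × Bool) = 6 by simp]
        rw [show (6:ℕ) • ENNReal.ofReal (400 * ρ ^ 2) = 6 * ENNReal.ofReal (400*ρ^2) by
          rw [nsmul_eq_mul]; norm_num]
        rw [show (6:ℝ≥0∞) = ENNReal.ofReal 6 by norm_num, ← ENNReal.ofReal_mul (by norm_num)]
        congr 1; ring

lemma kernel_pointwise_bound (ν K : ℝ) (b : ℝ → ℝ)
    (hν : 0 < ν) (hK : 0 < K)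
    (hb_nonneg : ∀ t, 0 ≤ b t)
    (hb_upper : ∀ θ ∈ Set.Ioc (0 : ℝ) (Real.pi / 2),
      b (Real.cos θ) ≤ K * θ ^ (-2 - ν)) :
    ∀ t : ℝ, 0 ≤ t → t < 1 →
      b t * (1 - t) ≤ K / 2 * (2 * (1 - t)) ^ (-(ν / 2)) := by
  intro t ht0 ht1
  set θ := Real.arccos t with hθ
  have hθpos : 0 < θ := Real.arccos_pos.2 ht1
  have hθle : θ ≤ Real.pi / 2 := Real.arccos_le_pi_div_two.2 ht0
  have hcos : Real.cos θ = t := Real.cos_arccos (by linarith) ht1.le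
  have hb := hb_upper θ ⟨hθpos, hθle⟩
  rw [hcos] at hb
  have h1t : 1 - t ≤ θ ^ 2 / 2 := by
    have h := Real.one_sub_sq_div_two_le_cos (x := θ)
    rw [hcos] at h; linarith
  have hrpow_nonneg : (0:ℝ) ≤ K * θ ^ (-2 - ν) :=
    mul_nonneg hK.le (Real.rpow_nonneg hθpos.le _)
  have step1 : b t * (1 - t) ≤ (K * θ ^ (-2 - ν)) * (θ ^ 2 / 2) := by
    apply mul_le_mul hb h1t (by linarith) hrpow_nonneg
  have step2 : (K * θ ^ (-2 - ν)) * (θ ^ 2 / 2) = K / 2 * θ ^ (-ν) := by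
    have h2 : θ ^ (-2 - ν) * θ ^ (2:ℕ) = θ ^ (-ν) := by
      rw [← Real.rpow_natCast θ 2, ← Real.rpow_add hθpos]
      congr 1; push_cast; ring
    calc (K * θ ^ (-2 - ν)) * (θ ^ 2 / 2) = K / 2 * (θ ^ (-2 - ν) * θ ^ (2:ℕ)) := by ring
      _ = K / 2 * θ ^ (-ν) := by rw [h2]
  have step3 : θ ^ (-ν) ≤ (2 * (1 - t)) ^ (-(ν / 2)) := by
    have hbase : 2 * (1 - t) ≤ θ ^ (2:ℕ) := by push_cast; nlinarith
    have hbpos : (0:ℝ) < 2 * (1 - t) := by linarith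
    have e : (θ ^ (2:ℕ) : ℝ) ^ (-(ν / 2)) = θ ^ (-ν) := by
      rw [← Real.rpow_natCast θ 2, ← Real.rpow_mul hθpos.le]
      congr 1; push_cast; ring
    rw [← e]
    exact Real.rpow_le_rpow_of_nonpos hbpos hbase (by linarith)
  calc b t * (1 - t) ≤ K / 2 * θ ^ (-ν) := by rw [← step2]; exact step1
    _ ≤ K / 2 * (2 * (1 - t)) ^ (-(ν / 2)) :=
        mul_le_mul_of_nonneg_left step3 (by linarith)

lemma min_comparison (ν : ℝ) (hν : 0 < ν) (hν2 : ν < 2) (s r : ℝ)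
    (hs : 1 ≤ s) (hr : 0 < r) :
    (min 1 (s ^ 2 / (2 * r ^ 2))) ^ (1 - ν / 2)
      ≤ 2 * min 1 ((s / Real.sqrt (1 + r ^ 2)) ^ (2 - ν)) := by
  set R := Real.sqrt (1 + r ^ 2) with hRdef
  have hRpos : 0 < R := Real.sqrt_pos.2 (by positivity)
  have hR2 : R ^ 2 = 1 + r ^ 2 := Real.sq_sqrt (by positivity)
  have hspos : 0 < s := lt_of_lt_of_le one_pos hs
  have hT0 : (0:ℝ) < min 1 (s ^ 2 / (2 * r ^ 2)) := lt_min one_pos (by positivity)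
  have hT1 : min 1 (s ^ 2 / (2 * r ^ 2)) ≤ 1 := min_le_left _ _
  have ha : (0:ℝ) ≤ 1 - ν / 2 := by linarith
  have hLHS1 : (min 1 (s ^ 2 / (2 * r ^ 2))) ^ (1 - ν / 2) ≤ 1 :=
    Real.rpow_le_one hT0.le hT1 ha
  rcases le_or_gt R s with hsR | hsR
  · have h1 : (1:ℝ) ≤ (s / R) ^ (2 - ν) :=
      Real.one_le_rpow ((one_le_div hRpos).2 hsR) (by linarith)
    rw [min_eq_left h1]
    linarith
  · have hm : min 1 ((s / R) ^ (2 - ν)) = (s / R) ^ (2 - ν) := by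
      apply min_eq_right
      apply Real.rpow_le_one (by positivity) _ (by linarith)
      rw [div_le_one hRpos]; exact hsR.le
    rw [hm]
    rcases le_or_gt 1 r with hr1 | hr1
    · -- r ≥ 1 : direct comparison
      have key : (min 1 (s ^ 2 / (2 * r ^ 2))) ^ (1 - ν / 2)
          ≤ (s ^ 2 / R ^ 2) ^ (1 - ν / 2) := by
        apply Real.rpow_le_rpow hT0.le _ ha
        calc min 1 (s ^ 2 / (2 * r ^ 2)) ≤ s ^ 2 / (2 * r ^ 2) := min_le_right _ _
          _ ≤ s ^ 2 / R ^ 2 := by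
              apply div_le_div_of_nonneg_left (by positivity) (by positivity)
              nlinarith
      have e : (s ^ 2 / R ^ 2) ^ (1 - ν / 2) = (s / R) ^ (2 - ν) := by
        rw [← div_pow, ← Real.rpow_natCast (s / R) 2, ← Real.rpow_mul (by positivity)]
        congr 1; push_cast; ring
      rw [e] at key
      have : (0:ℝ) ≤ (s / R) ^ (2 - ν) := Real.rpow_nonneg (by positivity) _
      linarith
    · -- r < 1 : RHS is bounded below by 1
      have hRle : R ≤ Real.sqrt 2 := Real.sqrt_le_sqrt (by nlinarith)
      have hdiv : 1 / Real.sqrt 2 ≤ s / R := by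
        apply div_le_div₀ hspos.le hs hRpos hRle
      have h2half : ((1:ℝ) / Real.sqrt 2) ^ (2 - ν) ≥ 1 / 2 := by
        have e1 : (1:ℝ) / Real.sqrt 2 = (2:ℝ) ^ (-(1/2) : ℝ) := by
          rw [Real.rpow_neg (by norm_num), ← Real.sqrt_eq_rpow, one_div]
        rw [e1, ← Real.rpow_mul (by norm_num : (0:ℝ) ≤ 2)]
        have h12 : (2:ℝ) ^ (-1:ℝ) ≤ (2:ℝ) ^ (-(1/2) * (2 - ν)) :=
          Real.rpow_le_rpow_of_exponent_le (by norm_num) (by linarith)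
        calc (1:ℝ)/2 = (2:ℝ) ^ (-1:ℝ) := by rw [Real.rpow_neg_one]; norm_num
          _ ≤ (2:ℝ) ^ (-(1/2) * (2 - ν)) := h12
      have hmono : ((1:ℝ) / Real.sqrt 2) ^ (2 - ν) ≤ (s / R) ^ (2 - ν) :=
        Real.rpow_le_rpow (by positivity) hdiv (by linarith)
      linarith

set_option maxHeartbeats 2000000 in
theorem sphere_integral_small_deviation_bound
    (ν K : ℝ) (b : ℝ → ℝ)
    (hν : 0 < ν) (hν2 : ν < 2) (hK : 0 < K)
    (hb_meas : Measurable b) (hb_nonneg : ∀ t, 0 ≤ b t)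
    (hb_zero : ∀ t < (0 : ℝ), b t = 0)
    (hb_upper : ∀ θ ∈ Set.Ioc (0 : ℝ) (Real.pi / 2),
      b (Real.cos θ) ≤ K * θ ^ (-2 - ν)) :
    ∃ C : ℝ, 0 < C ∧ ∀ ξ ξs : V3, ξ ≠ 0 →
      (∫⁻ σ : V3,
          ENNReal.ofReal (b ⟪‖ξ‖⁻¹ • ξ, σ⟫_ℝ * (1 - ⟪‖ξ‖⁻¹ • ξ, σ⟫_ℝ) *
            (if ‖ξ - ‖ξ‖ • σ‖ ≤ jap ξs then 1 else 0)) ∂sphereMeasure)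
        ≤ ENNReal.ofReal (C * min 1 ((jap ξs / jap ξ) ^ (2 - ν))) := by
  classical
  set q : ℝ := 1/2 with hq_def
  set a : ℝ := 1 - ν/2 with ha_def
  have ha : 0 < a := by rw [ha_def]; linarith
  set rg : ℝ := q ^ a with hrg_def
  have hq0 : (0:ℝ) ≤ q := by norm_num [hq_def]
  have hrg0 : 0 ≤ rg := Real.rpow_nonneg hq0 a
  have hrg1 : rg < 1 := Real.rpow_lt_one hq0 (by norm_num [hq_def]) ha
  refine ⟨4800 * K / (1 - rg), div_pos (by positivity) (by linarith), ?_⟩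
  intro ξ ξs hξ
  set n : V3 := ‖ξ‖⁻¹ • ξ with hn_def
  have hrξ : 0 < ‖ξ‖ := norm_pos_iff.2 hξ
  have hn : ‖n‖ = 1 := by
    rw [hn_def, norm_smul, norm_inv, norm_norm, inv_mul_cancel₀ hrξ.ne']
  set s : ℝ := jap ξs with hs_def
  have hs1 : 1 ≤ s := by
    rw [hs_def, jap]
    have h := Real.sq_sqrt (show (0:ℝ) ≤ 1 + ‖ξs‖^2 by positivity)
    nlinarith [Real.sqrt_nonneg (1 + ‖ξs‖^2), sq_nonneg ‖ξs‖,
      sq_nonneg (Real.sqrt (1 + ‖ξs‖^2) - 1)]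
  set T : ℝ := min 1 (s^2 / (2 * ‖ξ‖^2)) with hT_def
  have hT0 : 0 < T := lt_min one_pos (by positivity)
  have hT1 : T ≤ 1 := min_le_left _ _
  set Sk : ℕ → Set V3 := fun k =>
    {σ : V3 | 1 - ⟪n, σ⟫_ℝ ∈ Set.Ioc (q^(k+1) * T) (q^k * T)} with hSk_def
  have hSkm : ∀ k, MeasurableSet (Sk k) := by
    intro k
    have hcont : Continuous fun σ : V3 => 1 - ⟪n, σ⟫_ℝ :=
      continuous_const.sub (Continuous.inner continuous_const continuous_id)
    exact hcont.measurable measurableSet_Ioc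
  set ck : ℕ → ℝ≥0∞ := fun k => ENNReal.ofReal (K/2 * (q^k * T) ^ (-(ν/2))) with hck_def
  set g : ℕ → V3 → ℝ≥0∞ := fun k => (Sk k).indicator (fun _ => ck k) with hg_def
  -- pointwise bound on the sphere
  have hpoint : ∀ σ ∈ Metric.sphere (0:V3) 1,
      ENNReal.ofReal (b ⟪n, σ⟫_ℝ * (1 - ⟪n, σ⟫_ℝ) *
        (if ‖ξ - ‖ξ‖ • σ‖ ≤ s then 1 else 0)) ≤ ∑' k, g k σ := by
    intro σ hσ
    have hσn : ‖σ‖ = 1 := mem_sphere_zero_iff_norm.1 hσ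
    set t : ℝ := ⟪n, σ⟫_ℝ with ht_def
    have htle : t ≤ 1 := by
      have h := abs_real_inner_le_norm n σ
      rw [hn, hσn, one_mul] at h
      exact le_trans (le_abs_self t) h
    have hnormid : ‖ξ - ‖ξ‖ • σ‖^2 = ‖ξ‖^2 * (2 * (1 - t)) := by
      have e1 : ξ - ‖ξ‖ • σ = ‖ξ‖ • (n - σ) := by
        rw [smul_sub, hn_def, smul_smul, mul_inv_cancel₀ hrξ.ne', one_smul]
      have e2 : ‖n - σ‖^2 = 2 * (1 - t) := by
        rw [norm_sub_sq_real, hn, hσn, ht_def]; ring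
      rw [e1, norm_smul, mul_pow, norm_norm, e2]
    by_cases h1 : 1 - t ≤ 0
    · have h1e : 1 - t = 0 := le_antisymm h1 (by linarith)
      rw [show b t * (1-t) * (if ‖ξ - ‖ξ‖ • σ‖ ≤ s then (1:ℝ) else 0) = 0 by
        rw [h1e]; ring]
      simp
    push_neg at h1
    by_cases h2 : T < 1 - t
    · have hz : b t * (1 - t) * (if ‖ξ - ‖ξ‖ • σ‖ ≤ s then (1:ℝ) else 0) = 0 := by
        rcases lt_or_ge t 0 with htneg | htnn
        · rw [hb_zero t htneg]; ring
        · have hXlt : s^2/(2*‖ξ‖^2) < 1 - t := by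
            by_contra hX
            have : 1 - t ≤ T := le_min (by linarith) (not_lt.1 hX)
            linarith
          have hsq : s^2 < ‖ξ - ‖ξ‖ • σ‖^2 := by
            have e : s^2 = ‖ξ‖^2 * (2 * (s^2/(2*‖ξ‖^2))) := by field_simp
            rw [e, hnormid]
            apply mul_lt_mul_of_pos_left _ (by positivity)
            linarith
          have hgt : s < ‖ξ - ‖ξ‖ • σ‖ :=
            lt_of_pow_lt_pow_left₀ 2 (norm_nonneg _) hsq
          rw [if_neg (not_le.2 hgt)]; ring
      rw [hz]; simp
    push_neg at h2
    obtain ⟨m, hm⟩ := exists_pow_lt_of_lt_one (show (0:ℝ) < (1-t)/T from div_pos h1 hT0)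
      (show q < 1 by norm_num [hq_def])
    have hmP : q^m * T < 1 - t := by
      rw [← lt_div_iff₀ hT0] at *
      exact hm
    have hex : ∃ j, q^j * T < 1 - t := ⟨m, hmP⟩
    have hk1 := Nat.find_spec hex
    have hk1pos : Nat.find hex ≠ 0 := by
      intro h0
      rw [h0, pow_zero, one_mul] at hk1
      linarith
    obtain ⟨k, hkeq⟩ := Nat.exists_eq_succ_of_ne_zero hk1pos
    have hup : q^(k+1) * T < 1 - t := by
      rw [hkeq] at hk1
      simpa [Nat.succ_eq_add_one] using hk1
    have hlow : 1 - t ≤ q^k * T := by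
      have := Nat.find_min hex (show k < Nat.find hex by omega)
      linarith [not_lt.1 this]
    have hmem : σ ∈ Sk k := ⟨hup, hlow⟩
    have ht0 : 0 ≤ t := by
      have hqk1 : q^k ≤ 1 := pow_le_one₀ hq0 (by norm_num [hq_def])
      have hqknn : 0 ≤ q^k := pow_nonneg hq0 k
      nlinarith
    calc ENNReal.ofReal (b t * (1 - t) * (if ‖ξ - ‖ξ‖ • σ‖ ≤ s then (1:ℝ) else 0))
        ≤ ck k := by
          rw [hck_def]
          apply ENNReal.ofReal_le_ofReal
          have hind : (if ‖ξ - ‖ξ‖ • σ‖ ≤ s then (1:ℝ) else 0) ≤ 1 := by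
            split <;> norm_num
          have hindnn : (0:ℝ) ≤ (if ‖ξ - ‖ξ‖ • σ‖ ≤ s then (1:ℝ) else 0) := by
            split <;> norm_num
          have hbnn : 0 ≤ b t * (1 - t) := mul_nonneg (hb_nonneg t) (by linarith)
          have step : b t * (1-t) * (if ‖ξ - ‖ξ‖ • σ‖ ≤ s then (1:ℝ) else 0)
              ≤ b t * (1-t) := by
            calc b t * (1-t) * (if ‖ξ - ‖ξ‖ • σ‖ ≤ s then (1:ℝ) else 0)
                ≤ b t * (1-t) * 1 := mul_le_mul_of_nonneg_left hind hbnn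
              _ = b t * (1-t) := mul_one _
          have hker := kernel_pointwise_bound ν K b hν hK hb_nonneg hb_upper t ht0
            (by linarith)
          have hqkT : (0:ℝ) < q^k * T := by
            apply mul_pos _ hT0
            apply pow_pos (by norm_num [hq_def])
          have hlast : (2*(1-t))^(-(ν/2)) ≤ (q^k*T)^(-(ν/2)) := by
            apply Real.rpow_le_rpow_of_nonpos hqkT _ (by linarith)
            have e : q^(k+1) * T = q^k * T / 2 := by
              rw [pow_succ, hq_def]; ring
            linarith
          calc b t * (1-t) * (if ‖ξ - ‖ξ‖ • σ‖ ≤ s then (1:ℝ) else 0)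
              ≤ b t * (1-t) := step
            _ ≤ K/2 * (2*(1-t))^(-(ν/2)) := hker
            _ ≤ K/2 * (q^k*T)^(-(ν/2)) :=
                mul_le_mul_of_nonneg_left hlast (by linarith)
      _ = g k σ := by
          show ck k = (Sk k).indicator (fun _ => ck k) σ
          rw [Set.indicator_of_mem hmem]
      _ ≤ ∑' j, g j σ := ENNReal.le_tsum k
  -- integrate
  have hmain : (∫⁻ σ : V3,
      ENNReal.ofReal (b ⟪n, σ⟫_ℝ * (1 - ⟪n, σ⟫_ℝ) *
        (if ‖ξ - ‖ξ‖ • σ‖ ≤ s then 1 else 0)) ∂sphereMeasure)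
      ≤ ∑' k, ck k * μH[2] (Sk k ∩ Metric.sphere (0:V3) 1) := by
    rw [sphereMeasure]
    calc (∫⁻ σ : V3, ENNReal.ofReal (b ⟪n, σ⟫_ℝ * (1 - ⟪n, σ⟫_ℝ) *
            (if ‖ξ - ‖ξ‖ • σ‖ ≤ s then 1 else 0))
            ∂((μH[2] : Measure V3).restrict (Metric.sphere (0 : V3) 1)))
        ≤ ∫⁻ σ : V3, (∑' k, g k σ)
            ∂((μH[2] : Measure V3).restrict (Metric.sphere (0 : V3) 1)) := by
          apply lintegral_mono_ae
          filter_upwards [ae_restrict_mem Metric.isClosed_sphere.measurableSet] with σ hσ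
          exact hpoint σ hσ
      _ = ∑' k, ∫⁻ σ : V3, g k σ
            ∂((μH[2] : Measure V3).restrict (Metric.sphere (0 : V3) 1)) :=
          lintegral_tsum (fun k => (measurable_const.indicator (hSkm k)).aemeasurable)
      _ = ∑' k, ck k * μH[2] (Sk k ∩ Metric.sphere (0:V3) 1) := by
          apply tsum_congr
          intro k
          rw [hg_def]
          rw [lintegral_indicator (hSkm k)]
          rw [setLIntegral_const]
          rw [Measure.restrict_apply (hSkm k)]
  have hcap : ∀ k, μH[2] (Sk k ∩ Metric.sphere (0:V3) 1)
      ≤ ENNReal.ofReal (4800 * (q^k * T)) := by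
    intro k
    have hqkT : (0:ℝ) < q^k * T := by
      apply mul_pos _ hT0
      apply pow_pos (by norm_num [hq_def])
    set ρ : ℝ := Real.sqrt (2 * (q^k * T)) with hρ_def
    have hρnn : 0 ≤ ρ := Real.sqrt_nonneg _
    have hsub : Sk k ∩ Metric.sphere (0:V3) 1
        ⊆ Metric.sphere (0:V3) 1 ∩ Metric.closedBall n ρ := by
      rintro σ ⟨hσS, hσsp⟩
      refine ⟨hσsp, ?_⟩
      rw [Metric.mem_closedBall]
      have hσn : ‖σ‖ = 1 := mem_sphere_zero_iff_norm.1 hσsp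
      have e2 : ‖σ - n‖^2 = 2 * (1 - ⟪n, σ⟫_ℝ) := by
        rw [norm_sub_sq_real, hn, hσn, real_inner_comm]; ring
      have hle : ‖σ - n‖^2 ≤ 2 * (q^k * T) := by
        rw [e2]; linarith [hσS.2]
      calc dist σ n = ‖σ - n‖ := dist_eq_norm σ n
        _ = Real.sqrt (‖σ - n‖^2) := (Real.sqrt_sq (norm_nonneg _)).symm
        _ ≤ ρ := Real.sqrt_le_sqrt hle
    calc μH[2] (Sk k ∩ Metric.sphere (0:V3) 1)
        ≤ μH[2] (Metric.sphere (0:V3) 1 ∩ Metric.closedBall n ρ) := measure_mono hsub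
      _ ≤ ENNReal.ofReal (2400 * ρ^2) := cap_bound n ρ hρnn
      _ = ENNReal.ofReal (4800 * (q^k * T)) := by
          rw [hρ_def, Real.sq_sqrt (le_of_lt (by linarith : (0:ℝ) < 2*(q^k*T)))]
          congr 1; ring
  have hterm : ∀ k, ck k * ENNReal.ofReal (4800 * (q^k * T))
      = ENNReal.ofReal ((2400 * K * T^a) * rg^k) := by
    intro k
    have hqkT : (0:ℝ) < q^k * T := by
      apply mul_pos _ hT0
      apply pow_pos (by norm_num [hq_def])
    rw [hck_def, ← ENNReal.ofReal_mul
      (mul_nonneg (by linarith) (Real.rpow_nonneg hqkT.le _))]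
    congr 1
    have e1 : (q^k*T)^(-(ν/2)) * (q^k*T) = (q^k*T)^a := by
      nth_rewrite 2 [← Real.rpow_one (q^k*T)]
      rw [← Real.rpow_add hqkT]
      congr 1
      rw [ha_def]; ring
    have e2 : (q^k*T)^a = rg^k * T^a := by
      rw [Real.mul_rpow (pow_nonneg hq0 k) hT0.le]
      congr 1
      rw [hrg_def, ← Real.rpow_natCast q k, ← Real.rpow_mul hq0,
        mul_comm (k:ℝ) a, Real.rpow_mul hq0, Real.rpow_natCast]
    calc K/2 * (q^k*T)^(-(ν/2)) * (4800 * (q^k*T))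
        = 2400 * K * ((q^k*T)^(-(ν/2)) * (q^k*T)) := by ring
      _ = 2400 * K * ((q^k*T)^a) := by rw [e1]
      _ = (2400 * K * T^a) * rg^k := by rw [e2]; ring
  have hsum : ∑' (k:ℕ), ENNReal.ofReal ((2400 * K * T^a) * rg^k)
      = ENNReal.ofReal ((2400 * K * T^a) * (1 - rg)⁻¹) := by
    rw [← ENNReal.ofReal_tsum_of_nonneg
      (fun k => mul_nonneg
        (mul_nonneg (by positivity) (Real.rpow_nonneg hT0.le a))
        (pow_nonneg hrg0 k))
      ((summable_geometric_of_lt_one hrg0 hrg1).mul_left _)]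
    congr 1
    rw [tsum_mul_left, tsum_geometric_of_lt_one hrg0 hrg1]
  -- final comparison
  have hfinal : (2400 * K * T^a) * (1 - rg)⁻¹
      ≤ (4800 * K / (1 - rg)) * min 1 ((s / jap ξ) ^ (2 - ν)) := by
    have hcomp := min_comparison ν hν hν2 s ‖ξ‖ hs1 hrξ
    have hjap : jap ξ = Real.sqrt (1 + ‖ξ‖^2) := rfl
    rw [hjap]
    calc (2400 * K * T^a) * (1 - rg)⁻¹
        = (2400 * K * (1 - rg)⁻¹) * T^a := by ring
      _ ≤ (2400 * K * (1 - rg)⁻¹) *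
            (2 * min 1 ((s / Real.sqrt (1 + ‖ξ‖^2)) ^ (2 - ν))) := by
          apply mul_le_mul_of_nonneg_left _
            (mul_nonneg (by positivity) (inv_nonneg.2 (by linarith)))
          rw [hT_def, ha_def]
          exact hcomp
      _ = (4800 * K / (1 - rg)) * min 1 ((s / Real.sqrt (1 + ‖ξ‖^2)) ^ (2 - ν)) := by
          rw [div_eq_mul_inv]
          ring
  calc (∫⁻ σ : V3,
          ENNReal.ofReal (b ⟪n, σ⟫_ℝ * (1 - ⟪n, σ⟫_ℝ) *
            (if ‖ξ - ‖ξ‖ • σ‖ ≤ s then 1 else 0)) ∂sphereMeasure)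
      ≤ ∑' k, ck k * μH[2] (Sk k ∩ Metric.sphere (0:V3) 1) := hmain
    _ ≤ ∑' k, ck k * ENNReal.ofReal (4800 * (q^k * T)) := by
        apply ENNReal.tsum_le_tsum
        intro k
        gcongr
        exact hcap k
    _ = ∑' (k:ℕ), ENNReal.ofReal ((2400 * K * T^a) * rg^k) := by
        apply tsum_congr
        intro k
        exact hterm k
    _ = ENNReal.ofReal ((2400 * K * T^a) * (1 - rg)⁻¹) := hsum
    _ ≤ ENNReal.ofReal ((4800 * K / (1 - rg)) * min 1 ((s / jap ξ) ^ (2 - ν))) :=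
        ENNReal.ofReal_le_ofReal hfinal


end
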